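/- arXiv:2003.13041 — 3 statements merged into one kernel-verified Lean document; each statement's English description precedes it below -/
import Mathlib

section
/- Let Z(m) = V(1) + ⋯ + V(m) be a random walk on ℝ² whose i.i.d. increments V(s) have a radial, non-increasing probability density. Then for every m ≥ 1, the density p^{Z(m)} of Z(m) is radial and non-increasing; in particular, for all x, x' ∈ ℝ² with ‖x‖ ≤ ‖x'‖, p^{Z(m)}(x') ≤ p^{Z(m)}(x), and p^{Z(m)}(x) ≤ 1/(π‖x‖²) for x ≠ 0. -/
open MeasureTheory
open scoped RealInnerProductSpace

namespace Stmt3Aux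

noncomputable abbrev E2 : Type := EuclideanSpace ℝ (Fin 2)

noncomputable def ee : E2 := EuclideanSpace.single 0 1

lemma norm_ee : ‖ee‖ = 1 := by simp [ee, EuclideanSpace.norm_single]

lemma norm_smul_ee (r : ℝ) (hr : 0 ≤ r) : ‖r • ee‖ = r := by
  rw [norm_smul, norm_ee, mul_one, Real.norm_eq_abs, abs_of_nonneg hr]

noncomputable def NN : E2 ≃ₗᵢ[ℝ] E2 := Submodule.reflection (ℝ ∙ ee)

lemma NN_ee : NN ee = ee := Submodule.reflection_mem_subspace_eq_self (Submodule.mem_span_singleton_self ee)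

lemma NN_NN (y : E2) : NN (NN y) = y := Submodule.reflection_reflection _ y

lemma inner_NN (y : E2) : ⟪ee, NN y⟫ = ⟪ee, y⟫ := by
  conv_lhs => rw [← NN_ee]
  exact NN.inner_map_map ee y

lemma norm_smul_ee_sub_sq (s : ℝ) (z : E2) :
    ‖s • ee - z‖ ^ 2 = s ^ 2 - 2 * s * ⟪ee, z⟫ + ‖z‖ ^ 2 := by
  rw [norm_sub_sq_real, real_inner_smul_left, norm_smul, norm_ee, Real.norm_eq_abs]
  rw [mul_one, sq_abs]
  ring

noncomputable def SS (c : ℝ) : E2 → E2 := fun y => c • ee - NN y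

lemma SS_SS (c : ℝ) (y : E2) : SS c (SS c y) = y := by
  simp only [SS, map_sub, LinearIsometryEquiv.map_smul, NN_ee, NN_NN, sub_sub_cancel]

lemma inner_SS (c : ℝ) (y : E2) : ⟪ee, SS c y⟫ = c - ⟪ee, y⟫ := by
  simp only [SS, inner_sub_right, real_inner_smul_right, inner_NN]
  have h : ⟪ee, ee⟫ = (1:ℝ) := by
    rw [real_inner_self_eq_norm_sq, norm_ee]; norm_num
  rw [h, mul_one]

lemma norm_SS_sq (c : ℝ) (y : E2) : ‖SS c y‖ ^ 2 = c ^ 2 - 2 * c * ⟪ee, y⟫ + ‖y‖ ^ 2 := by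
  have : ‖SS c y‖ ^ 2 = ‖c • ee - NN y‖ ^ 2 := rfl
  rw [this, norm_smul_ee_sub_sq, inner_NN, NN.norm_map]

lemma norm_smul_ee_sub_SS (s s' c : ℝ) (hss : s + s' = c) (y : E2) :
    ‖s • ee - SS c y‖ = ‖s' • ee - y‖ := by
  have h2 : ‖s • ee - SS c y‖ ^ 2 = ‖s' • ee - y‖ ^ 2 := by
    have lhs : ‖s • ee - SS c y‖ ^ 2
        = s ^ 2 - 2 * s * (c - ⟪ee, y⟫) + (c ^ 2 - 2 * c * ⟪ee, y⟫ + ‖y‖ ^ 2) := by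
      rw [norm_smul_ee_sub_sq, inner_SS, norm_SS_sq]
    have rhs : ‖s' • ee - y‖ ^ 2 = s' ^ 2 - 2 * s' * ⟪ee, y⟫ + ‖y‖ ^ 2 :=
      norm_smul_ee_sub_sq s' y
    rw [lhs, rhs]
    have hs' : s' = c - s := by linarith
    subst hs'
    ring
  rw [← Real.sqrt_sq (norm_nonneg (s • ee - SS c y)),
    ← Real.sqrt_sq (norm_nonneg (s' • ee - y)), h2]

lemma SS_measurePreserving (c : ℝ) : MeasurePreserving (SS c) volume volume :=
  (Measure.measurePreserving_sub_left volume (c • ee)).comp NN.measurePreserving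

lemma SS_measurableEmbedding (c : ℝ) : MeasurableEmbedding (SS c) := by
  have : SS c = (fun z : E2 => c • ee - z) ∘ (NN : E2 → E2) := rfl
  rw [this]
  exact (Homeomorph.subLeft (c • ee)).measurableEmbedding.comp
    NN.toHomeomorph.measurableEmbedding

/-- The key monotonicity lemma: a convolution of two radial nonincreasing nonnegative
functions is radially nonincreasing. -/
lemma conv_mono (f g : E2 → ℝ)
    (hf0 : ∀ x, 0 ≤ f x) (hg0 : ∀ x, 0 ≤ g x)
    (hfm : ∀ u v : E2, ‖u‖ ≤ ‖v‖ → f v ≤ f u) (hgm : ∀ u v : E2, ‖u‖ ≤ ‖v‖ → g v ≤ g u)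
    (hfmeas : Measurable f) (hgmeas : Measurable g) (hgi : Integrable g volume) :
    ∀ u v : E2, ‖u‖ ≤ ‖v‖ → (∫ y, f (v - y) * g y) ≤ ∫ y, f (u - y) * g y := by
  have frad : ∀ u v : E2, ‖u‖ = ‖v‖ → f u = f v :=
    fun u v h => le_antisymm (hfm v u h.ge) (hfm u v h.le)
  have grad : ∀ u v : E2, ‖u‖ = ‖v‖ → g u = g v :=
    fun u v h => le_antisymm (hgm v u h.ge) (hgm u v h.le)
  -- integrability of the convolution integrand
  have hint : ∀ x : E2, Integrable (fun y => f (x - y) * g y) volume := by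
    intro x
    refine (hgi.const_mul (f 0)).mono' ?_ ?_
    · exact ((hfmeas.comp (measurable_const.sub measurable_id)).mul hgmeas).aestronglyMeasurable
    · filter_upwards with y
      rw [Real.norm_eq_abs, abs_of_nonneg (mul_nonneg (hf0 _) (hg0 _))]
      exact mul_le_mul_of_nonneg_right (hfm 0 (x - y) (by simp)) (hg0 y)
  -- radial invariance of the convolution
  have convrad : ∀ u v : E2, ‖u‖ = ‖v‖ →
      (∫ y, f (u - y) * g y) = ∫ y, f (v - y) * g y := by
    intro u v h
    rcases eq_or_ne u v with rfl | huv
    · rfl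
    set T : E2 ≃ₗᵢ[ℝ] E2 := Submodule.reflection (ℝ ∙ (u - v))ᗮ with hT
    have hTu : T u = v := Submodule.reflection_sub h
    have hTv : T v = u := by rw [← hTu]; exact Submodule.reflection_reflection _ u
    have key := (T.measurePreserving.integral_comp T.toHomeomorph.measurableEmbedding
      (fun y => f (u - y) * g y))
    rw [← key]
    refine integral_congr_ae (Filter.Eventually.of_forall fun y => ?_)
    have h1 : (u - T y) = T (v - y) := by rw [map_sub, hTv]
    have h2 : f (u - T y) = f (v - y) := by rw [h1]; exact frad _ _ (T.norm_map _)
    have h3 : g (T y) = g y := grad _ _ (T.norm_map _)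
    simp only [h2, h3]
  -- monotonicity along the axis through ee
  have axis : ∀ a b : ℝ, 0 ≤ a → a ≤ b →
      (∫ y, f (b • ee - y) * g y) ≤ ∫ y, f (a • ee - y) * g y := by
    intro a b ha hab
    have hb : (0:ℝ) ≤ b := le_trans ha hab
    set c : ℝ := a + b with hc
    set F : E2 → ℝ := fun y => (f (a • ee - y) - f (b • ee - y)) * g y with hF
    have hGH : ∀ y : E2, ⟪ee, y⟫ ≤ c / 2 → 0 ≤ F y + F (SS c y) := by
      intro y hy
      have h1 : ‖a • ee - y‖ ≤ ‖b • ee - y‖ := by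
        have hsq : ‖a • ee - y‖ ^ 2 ≤ ‖b • ee - y‖ ^ 2 := by
          rw [norm_smul_ee_sub_sq, norm_smul_ee_sub_sq]
          nlinarith [hy, hab, ha]
        nlinarith [norm_nonneg (a • ee - y), norm_nonneg (b • ee - y)]
      have h2 : ‖y‖ ≤ ‖SS c y‖ := by
        have hsq : ‖y‖ ^ 2 ≤ ‖SS c y‖ ^ 2 := by
          rw [norm_SS_sq]
          nlinarith [hy, ha, hb]
        nlinarith [norm_nonneg y, norm_nonneg (SS c y)]
      have hA : f (b • ee - y) ≤ f (a • ee - y) := hfm _ _ h1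
      have hg' : g (SS c y) ≤ g y := hgm _ _ h2
      have e1' : f (a • ee - SS c y) = f (b • ee - y) :=
        frad _ _ (norm_smul_ee_sub_SS a b c rfl y)
      have e2' : f (b • ee - SS c y) = f (a • ee - y) :=
        frad _ _ (norm_smul_ee_sub_SS b a c (by rw [hc]; ring) y)
      simp only [hF, e1', e2']
      nlinarith [mul_nonneg (sub_nonneg.2 hA) (sub_nonneg.2 hg')]
    have hGnn : ∀ y : E2, 0 ≤ F y + F (SS c y) := by
      intro y
      rcases le_or_gt (⟪ee, y⟫) (c / 2) with h | h
      · exact hGH y h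
      · have h' : ⟪ee, SS c y⟫ ≤ c / 2 := by rw [inner_SS]; linarith
        have := hGH (SS c y) h'
        rwa [SS_SS c y, add_comm] at this
    -- integrability of F
    have hFeq : F = fun y => f (a • ee - y) * g y - f (b • ee - y) * g y := by
      funext y; simp only [hF]; ring
    have hFint : Integrable F volume := by
      rw [hFeq]; exact (hint (a • ee)).sub (hint (b • ee))
    have hFSint : Integrable (fun y => F (SS c y)) volume :=
      ((SS_measurePreserving c).integrable_comp_emb (SS_measurableEmbedding c)).2 hFint
    have hFS : (∫ y, F (SS c y)) = ∫ y, F y :=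
      (SS_measurePreserving c).integral_comp (SS_measurableEmbedding c) F
    have hsum : 0 ≤ ∫ y, (F y + F (SS c y)) :=
      integral_nonneg fun y => hGnn y
    rw [integral_add hFint hFSint, hFS] at hsum
    have hFval : (∫ y, F y) = (∫ y, f (a • ee - y) * g y) - ∫ y, f (b • ee - y) * g y := by
      rw [hFeq]; exact integral_sub (hint (a • ee)) (hint (b • ee))
    rw [hFval] at hsum
    linarith
  -- combine
  intro u v huv
  calc (∫ y, f (v - y) * g y) = ∫ y, f ((‖v‖ • ee) - y) * g y :=
        convrad v (‖v‖ • ee) (by rw [norm_smul_ee _ (norm_nonneg v)])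
    _ ≤ ∫ y, f ((‖u‖ • ee) - y) * g y := axis ‖u‖ ‖v‖ (norm_nonneg u) huv
    _ = ∫ y, f (u - y) * g y :=
        convrad (‖u‖ • ee) u (by rw [norm_smul_ee _ (norm_nonneg u)])

end Stmt3Aux

open Stmt3Aux

/-- Let `Z(m) = V(1) + ⋯ + V(m)` be a random walk on `ℝ²` whose i.i.d. increments have
a radial, non-increasing probability density `p`. The density `q m` of `Z(m)` is the
`m`-fold convolution of `p`. Then for every `m ≥ 1` the density `q m` is radial and
non-increasing; in particular `q m x' ≤ q m x` whenever `‖x‖ ≤ ‖x'‖`, and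
`q m x ≤ 1/(π ‖x‖²)` for `x ≠ 0`. -/
theorem stmt_3 (p : EuclideanSpace ℝ (Fin 2) → ℝ)
    (hnonneg : ∀ x, 0 ≤ p x) (hint : Integrable p volume) (hprob : ∫ x, p x = 1)
    (ptilde : ℝ → ℝ) (hrad : ∀ x, p x = ptilde ‖x‖)
    (hmono : AntitoneOn ptilde (Set.Ici 0))
    (q : ℕ → EuclideanSpace ℝ (Fin 2) → ℝ)
    (hq1 : q 1 = p)
    (hqconv : ∀ m, 1 ≤ m → ∀ x, q (m + 1) x = ∫ y, q m (x - y) * p y) :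
    ∀ m, 1 ≤ m →
      (∃ qtilde : ℝ → ℝ, (∀ x, q m x = qtilde ‖x‖) ∧ AntitoneOn qtilde (Set.Ici 0)) ∧
      (∀ x x' : EuclideanSpace ℝ (Fin 2), ‖x‖ ≤ ‖x'‖ → q m x' ≤ q m x) ∧
      (∀ x : EuclideanSpace ℝ (Fin 2), x ≠ 0 → q m x ≤ 1 / (Real.pi * ‖x‖ ^ 2)) := by
  -- p is measurable
  have pmeas : Measurable p := by
    have hanti : Antitone (fun r : ℝ => ptilde (max r 0)) := by
      intro r s hrs
      exact hmono (le_max_right r 0) (le_max_right s 0) (max_le_max hrs le_rfl)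
    have : p = fun x => (fun r : ℝ => ptilde (max r 0)) ‖x‖ := by
      funext x
      simp only [max_eq_left (norm_nonneg x), hrad x]
    rw [this]
    exact hanti.measurable.comp measurable_norm
  -- p is radially nonincreasing
  have pmono : ∀ u v : E2, ‖u‖ ≤ ‖v‖ → p v ≤ p u := by
    intro u v h
    rw [hrad u, hrad v]
    exact hmono (norm_nonneg u) (norm_nonneg v) h
  -- the invariant carried through the induction
  have key : ∀ m, 1 ≤ m →
      Measurable (q m) ∧ (∀ x, 0 ≤ q m x) ∧
      (∀ u v : E2, ‖u‖ ≤ ‖v‖ → q m v ≤ q m u) ∧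
      Integrable (q m) volume ∧ (∫ x, q m x) = 1 := by
    intro m hm
    induction m, hm using Nat.le_induction with
    | base =>
      rw [hq1]
      exact ⟨pmeas, hnonneg, pmono, hint, hprob⟩
    | succ n hn ih =>
      obtain ⟨hqm_meas, hqm_nn, hqm_mono, hqm_int, hqm_one⟩ := ih
      have hdef : ∀ x, q (n + 1) x = ∫ y, q n (x - y) * p y := hqconv n hn
      -- measurability
      have meas : Measurable (q (n + 1)) := by
        have hsm : StronglyMeasurable (Function.uncurry fun x y : E2 => q n (x - y) * p y) := by
          apply Measurable.stronglyMeasurable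
          exact ((hqm_meas.comp (measurable_fst.sub measurable_snd)).mul
            (pmeas.comp measurable_snd))
        have := MeasureTheory.StronglyMeasurable.integral_prod_right' (ν := (volume : Measure E2)) hsm
        have heq : q (n + 1) = fun x => ∫ y, (Function.uncurry fun x y : E2 => q n (x - y) * p y) (x, y) := by
          funext x; rw [hdef x]; rfl
        rw [heq]
        exact this.measurable
      -- nonnegativity
      have nn : ∀ x, 0 ≤ q (n + 1) x := by
        intro x
        rw [hdef x]
        exact integral_nonneg fun y => mul_nonneg (hqm_nn _) (hnonneg y)
      -- monotonicity via the convolution lemma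
      have mono : ∀ u v : E2, ‖u‖ ≤ ‖v‖ → q (n + 1) v ≤ q (n + 1) u := by
        intro u v h
        rw [hdef u, hdef v]
        exact conv_mono (q n) p hqm_nn hnonneg hqm_mono pmono hqm_meas pmeas hint u v h
      -- integrability and total mass via the convolution API
      have hconv_eq : q (n + 1)
          = MeasureTheory.convolution (q n) p (ContinuousLinearMap.mul ℝ ℝ) volume := by
        funext x
        rw [hdef x, convolution_def]
        have hsub := integral_sub_left_eq_self (fun t => q n t * p (x - t)) volume x
        simp only [sub_sub_cancel] at hsub
        simp only [ContinuousLinearMap.mul_apply']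
        exact hsub
      have integ : Integrable (q (n + 1)) volume := by
        rw [hconv_eq]
        exact hqm_int.integrable_convolution (ContinuousLinearMap.mul ℝ ℝ) hint
      have total : (∫ x, q (n + 1) x) = 1 := by
        rw [hconv_eq, integral_convolution (ContinuousLinearMap.mul ℝ ℝ) hqm_int hint,
          hprob, hqm_one]
        simp
      exact ⟨meas, nn, mono, integ, total⟩
  intro m hm
  obtain ⟨hmeas, hnn, hmono', hinteg, hone⟩ := key m hm
  have hrad' : ∀ u v : E2, ‖u‖ = ‖v‖ → q m u = q m v :=
    fun u v h => le_antisymm (hmono' v u h.ge) (hmono' u v h.le)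
  refine ⟨⟨fun r => q m (r • ee), fun x => ?_, fun r hr s hs hrs => ?_⟩, hmono', ?_⟩
  · exact hrad' x (‖x‖ • ee) (by rw [norm_smul_ee _ (norm_nonneg x)])
  · exact hmono' (r • ee) (s • ee)
      (by rw [norm_smul_ee _ hr, norm_smul_ee _ hs]; exact hrs)
  · intro x hx
    have hr : (0:ℝ) < ‖x‖ := norm_pos_iff.mpr hx
    -- volume of the ball of radius ‖x‖
    have hball : (volume (Metric.ball (0 : E2) ‖x‖)).toReal = Real.pi * ‖x‖ ^ 2 := by
      rw [EuclideanSpace.volume_ball]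
      simp only [Fintype.card_fin]
      rw [show ((2:ℕ):ℝ) / 2 + 1 = (2:ℝ) by norm_num, Real.Gamma_two]
      rw [ENNReal.toReal_mul, ENNReal.toReal_pow, ENNReal.toReal_ofReal hr.le,
        ENNReal.toReal_ofReal (by positivity)]
      rw [div_one, Real.sq_sqrt Real.pi_nonneg]
      ring
    have hle : q m x * (Real.pi * ‖x‖ ^ 2) ≤ 1 := by
      have h1 : (∫ _z in Metric.ball (0 : E2) ‖x‖, q m x) ≤
          ∫ z in Metric.ball (0 : E2) ‖x‖, q m z := by
        refine setIntegral_mono_on (integrableOn_const measure_ball_lt_top.ne)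
          hinteg.integrableOn measurableSet_ball ?_
        intro z hz
        exact hmono' z x (le_of_lt (mem_ball_zero_iff.mp hz))
      have h2 : (∫ z in Metric.ball (0 : E2) ‖x‖, q m z) ≤ ∫ z, q m z :=
        setIntegral_le_integral hinteg (Filter.Eventually.of_forall hnn)
      have h3 : (∫ _z in Metric.ball (0 : E2) ‖x‖, q m x) =
          (volume (Metric.ball (0 : E2) ‖x‖)).toReal * q m x := by
        rw [setIntegral_const, smul_eq_mul]; rfl
      rw [h3, hball] at h1
      calc q m x * (Real.pi * ‖x‖ ^ 2) = Real.pi * ‖x‖ ^ 2 * q m x := by ring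
        _ ≤ ∫ z in Metric.ball (0 : E2) ‖x‖, q m z := h1
        _ ≤ 1 := by rw [← hone]; exact h2
    have hpos : (0:ℝ) < Real.pi * ‖x‖ ^ 2 := by positivity
    exact (le_div_iff₀ hpos).mpr hle
end

section
/- Let Z be a random walk on ℝ² whose step lengths satisfy: the probability that a single step has length at least 2d is at least a/(6d) for every d ∈ [1, ℓ_max/3] (as holds for the Cauchy step distribution with cutoff ℓ_max). Then for any integer m ≥ 2 and any d ∈ [1, ℓ_max/3], the probability that there exists s ≤ m with ‖Z(s)‖ ≥ d is at least 1 − e^{−c m/d}, for some constant c > 0 depending only on a. -/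
open MeasureTheory ProbabilityTheory

/-- Let `Z(s) = V(1)+⋯+V(s)` be a random walk on `ℝ²` with i.i.d. steps such that the
probability that a single step has length at least `2d` is at least `a/(6d)` for every
`d ∈ [1, ℓ_max/3]`. Then there is a constant `c > 0` depending only on `a` such that
for any integer `m ≥ 2` and any `d ∈ [1, ℓ_max/3]`, the probability that some `s ≤ m`
has `‖Z(s)‖ ≥ d` is at least `1 − e^{−c m/d}`. -/
theorem stmt_9 (a : ℝ) (ha : 0 < a) :
    ∃ c : ℝ, 0 < c ∧
      ∀ {Ω : Type} [MeasurableSpace Ω] (μ : Measure Ω), IsProbabilityMeasure μ →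
      ∀ (lmax : ℝ) (V : ℕ → Ω → EuclideanSpace ℝ (Fin 2)),
        (∀ s, Measurable (V s)) →
        iIndepFun V μ →
        (∀ s, IdentDistrib (V s) (V 0) μ μ) →
        (∀ d : ℝ, 1 ≤ d → d ≤ lmax / 3 →
          ENNReal.ofReal (a / (6 * d)) ≤ μ {ω | 2 * d ≤ ‖V 0 ω‖}) →
        ∀ Z : ℕ → Ω → EuclideanSpace ℝ (Fin 2),
          (∀ s ω, Z s ω = ∑ i ∈ Finset.range s, V i ω) →
          ∀ m : ℕ, 2 ≤ m → ∀ d : ℝ, 1 ≤ d → d ≤ lmax / 3 →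
            1 - Real.exp (-c * m / d) ≤
              (μ {ω | ∃ s ≤ m, d ≤ ‖Z s ω‖}).toReal := by
  refine ⟨a / 6, by positivity, ?_⟩
  intro Ω _ μ hμ lmax V hVmeas hVindep hVident hstep Z hZ m hm d hd1 hd2
  set p : ℝ := a / (6 * d) with hp
  have hd0 : (0:ℝ) < d := lt_of_lt_of_le one_pos hd1
  have hp0 : 0 < p := by positivity
  -- the "big step" set
  set S : Set (EuclideanSpace ℝ (Fin 2)) := {x | 2 * d ≤ ‖x‖} with hS
  have hSmeas : MeasurableSet S :=
    (isClosed_le continuous_const continuous_norm).measurableSet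
  set q : ENNReal := μ (V 0 ⁻¹' S) with hq
  have hq_le_one : q ≤ 1 := prob_le_one
  have hq_ge : ENNReal.ofReal p ≤ q := hstep d hd1 hd2
  -- event and complement
  set A : Set Ω := {ω | ∃ s ≤ m, d ≤ ‖Z s ω‖} with hA
  -- complement is contained in "all steps small"
  have hsub : Aᶜ ⊆ ⋂ i ∈ Finset.range m, (V i ⁻¹' S)ᶜ := by
    intro ω hω
    simp only [hA, Set.mem_compl_iff, Set.mem_setOf_eq, not_exists, not_le] at hω
    push_neg at hω
    simp only [Set.mem_iInter, Set.mem_compl_iff, Set.mem_preimage, hS, Set.mem_setOf_eq,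
      Finset.mem_range, not_le]
    intro i hi
    have h1 : ‖Z i ω‖ < d := hω i (le_of_lt hi)
    have h2 : ‖Z (i+1) ω‖ < d := hω (i+1) hi
    have hV : V i ω = Z (i+1) ω - Z i ω := by
      rw [hZ, hZ, Finset.sum_range_succ]; abel
    calc ‖V i ω‖ = ‖Z (i+1) ω - Z i ω‖ := by rw [hV]
      _ ≤ ‖Z (i+1) ω‖ + ‖Z i ω‖ := norm_sub_le _ _
      _ < d + d := add_lt_add h2 h1
      _ = 2 * d := by ring
  -- measure of the intersection
  have hmeasV : ∀ i, μ ((V i ⁻¹' S)ᶜ) = 1 - q := by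
    intro i
    have hEi : μ (V i ⁻¹' S) = q := (hVident i).measure_mem_eq hSmeas
    rw [prob_compl_eq_one_sub ((hVmeas i) hSmeas), hEi]
  have hindep : μ (⋂ i ∈ Finset.range m, (V i ⁻¹' S)ᶜ)
      = ∏ i ∈ Finset.range m, μ ((V i ⁻¹' S)ᶜ) := by
    refine hVindep.meas_biInter (fun i _ => ?_)
    exact ⟨Sᶜ, hSmeas.compl, rfl⟩
  have hprod : μ (⋂ i ∈ Finset.range m, (V i ⁻¹' S)ᶜ) = (1 - q) ^ m := by
    rw [hindep]
    simp [hmeasV]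
  have hcompl_le : μ Aᶜ ≤ (1 - q) ^ m := hprod ▸ measure_mono hsub
  -- pass to reals
  have hqR : p ≤ q.toReal := by
    have := ENNReal.toReal_mono (measure_ne_top μ _) hq_ge
    rwa [ENNReal.toReal_ofReal hp0.le] at this
  have hqR1 : q.toReal ≤ 1 := by
    simpa using ENNReal.toReal_mono (by norm_num) hq_le_one
  have h1q : (1 - q).toReal = 1 - q.toReal := by
    rw [ENNReal.toReal_sub_of_le hq_le_one (by norm_num)]; simp
  have hcomplR : (μ Aᶜ).toReal ≤ (1 - q.toReal) ^ m := by
    have := ENNReal.toReal_mono (ENNReal.pow_ne_top (ENNReal.sub_ne_top ENNReal.one_ne_top)) hcompl_le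
    rwa [ENNReal.toReal_pow, h1q] at this
  have hsum : 1 ≤ (μ A).toReal + (μ Aᶜ).toReal := by
    have h : μ Set.univ ≤ μ A + μ Aᶜ := by
      rw [← Set.union_compl_self A]; exact measure_union_le _ _
    rw [measure_univ] at h
    have := ENNReal.toReal_mono (by finiteness) h
    rwa [ENNReal.toReal_add (measure_ne_top μ _) (measure_ne_top μ _), ENNReal.toReal_one] at this
  -- exponential bound
  have hexp : (1 - q.toReal) ^ m ≤ Real.exp (-(a/6) * m / d) := by
    have h1 : 1 - q.toReal ≤ Real.exp (-p) := by
      have := Real.add_one_le_exp (-p)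
      linarith
    have h0 : (0:ℝ) ≤ 1 - q.toReal := by linarith
    calc (1 - q.toReal) ^ m ≤ (Real.exp (-p)) ^ m := pow_le_pow_left₀ h0 h1 m
      _ = Real.exp (-p * m) := by rw [← Real.exp_nat_mul]; ring_nf
      _ = Real.exp (-(a/6) * m / d) := by
          congr 1
          rw [hp]
          field_simp
  linarith
end

section
/- Let V = (V₁, V₂) be an isotropic random vector in ℝ² whose length has the Lévy density with exponent μ ∈ (1,3] and cutoff ℓ_max (possibly infinite). Then the density of |V₁| satisfies p^{|V₁|}(x) = Θ(x^{-μ}) for x ∈ (1, ℓ_max/2), i.e., the projection of a two-dimensional Lévy step on a coordinate axis is again Lévy-distributed with the same exponent μ. -/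
open MeasureTheory intervalIntegral

lemma pt_aux (μ a lmax x₁ t : ℝ) (hx1 : 1 < x₁) (hl0 : 0 < lmax) (ht0 : 0 < t)
    (hts : x₁ ^ 2 + t ^ 2 < lmax ^ 2) :
    (if Real.sqrt (x₁ ^ 2 + t ^ 2) < 0 then (0:ℝ)
      else if Real.sqrt (x₁ ^ 2 + t ^ 2) ≤ 1 then a
      else if Real.sqrt (x₁ ^ 2 + t ^ 2) < lmax then
        a * Real.sqrt (x₁ ^ 2 + t ^ 2) ^ (-μ) else 0) /
      (2 * Real.pi * Real.sqrt (x₁ ^ 2 + t ^ 2))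
    = a / (2 * Real.pi) * (x₁ ^ 2 + t ^ 2) ^ (-((μ+1)/2)) := by
  have hπ := Real.pi_pos
  set s := x₁ ^ 2 + t ^ 2 with hs
  have hsp : 0 < s := by nlinarith
  have hs1 : 1 < s := by nlinarith
  have hq1 : 1 < Real.sqrt s := by
    rw [show (1:ℝ) = Real.sqrt 1 from Real.sqrt_one.symm]
    exact Real.sqrt_lt_sqrt zero_le_one hs1
  have hqlm : Real.sqrt s < lmax := (Real.sqrt_lt' hl0).mpr hts
  rw [if_neg (by linarith), if_neg (by linarith), if_pos hqlm]
  rw [Real.sqrt_eq_rpow, ← Real.rpow_mul hsp.le]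
  have hkey : s ^ ((1/2:ℝ)*(-μ)) = s ^ (-((μ+1)/2)) * s ^ ((1:ℝ)/2) := by
    rw [← Real.rpow_add hsp]; congr 1; ring
  have hsne : (0:ℝ) < s ^ ((1:ℝ)/2) := Real.rpow_pos_of_pos hsp _
  rw [hkey]
  field_simp

lemma J_aux (μ x₁ X : ℝ) (hμ1 : 1 < μ) (hx1 : 1 < x₁) (hxX : x₁ ≤ X) :
    2 ^ (-((μ+1)/2)) * x₁ ^ (-μ) ≤ (∫ t in (0:ℝ)..X, (x₁^2+t^2)^(-((μ+1)/2))) ∧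
    (∫ t in (0:ℝ)..X, (x₁^2+t^2)^(-((μ+1)/2))) ≤ (1+1/μ) * x₁^(-μ) := by
  set e : ℝ := -((μ+1)/2) with he
  have hx0 : (0:ℝ) < x₁ := by linarith
  have hμ0 : (0:ℝ) < μ := by linarith
  have hX0 : (0:ℝ) ≤ X := by linarith
  have hs : ∀ t : ℝ, 0 < x₁ ^ 2 + t ^ 2 := fun t => by nlinarith [sq_nonneg t]
  have hcont : Continuous fun t : ℝ => (x₁ ^ 2 + t ^ 2) ^ e := by
    have hc : Continuous fun t : ℝ => x₁ ^ 2 + t ^ 2 := by continuity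
    exact hc.rpow_const (fun t => Or.inl (hs t).ne')
  have hint : ∀ u v : ℝ, IntervalIntegrable (fun t : ℝ => (x₁ ^ 2 + t ^ 2) ^ e) volume u v :=
    fun u v => hcont.intervalIntegrable u v
  have hsplit : (∫ t in (0:ℝ)..X, (x₁^2+t^2)^e)
      = (∫ t in (0:ℝ)..x₁, (x₁^2+t^2)^e) + ∫ t in x₁..X, (x₁^2+t^2)^e :=
    (integral_add_adjacent_intervals (hint 0 x₁) (hint x₁ X)).symm
  -- pow conversions
  have hpow : ∀ y : ℝ, 0 < y → (y ^ 2) ^ e = y ^ (-(μ+1)) := by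
    intro y hy
    rw [← Real.rpow_natCast y 2, ← Real.rpow_mul hy.le]
    norm_num
    rw [he]; congr 1; ring
  have he0 : e ≤ 0 := by rw [he]; linarith
  constructor
  · -- lower bound
    have h1 : (x₁ - 0) • ((2*x₁^2) ^ e) ≤ ∫ t in (0:ℝ)..x₁, (x₁^2+t^2)^e := by
      rw [← intervalIntegral.integral_const]
      apply intervalIntegral.integral_mono_on hx0.le intervalIntegrable_const (hint 0 x₁)
      intro t ht
      apply Real.rpow_le_rpow_of_nonpos (by positivity) _ he0
      nlinarith [ht.1, ht.2]
    have h2 : (0:ℝ) ≤ ∫ t in x₁..X, (x₁^2+t^2)^e :=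
      intervalIntegral.integral_nonneg hxX (fun t _ => Real.rpow_nonneg (hs t).le _)
    have hval : (x₁ - 0) • ((2*x₁^2) ^ e) = 2 ^ e * x₁ ^ (-μ) := by
      rw [smul_eq_mul, sub_zero, Real.mul_rpow (by norm_num) (by positivity), hpow x₁ hx0]
      rw [show x₁ * (2 ^ e * x₁ ^ (-(μ+1))) = 2 ^ e * (x₁ ^ (1:ℝ) * x₁ ^ (-(μ+1))) by
        rw [Real.rpow_one]; ring]
      rw [← Real.rpow_add hx0]
      congr 1; ring
    rw [hsplit]
    calc 2 ^ e * x₁ ^ (-μ) = (x₁ - 0) • ((2*x₁^2) ^ e) := hval.symm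
      _ ≤ _ := by linarith
  · -- upper bound
    have h1 : (∫ t in (0:ℝ)..x₁, (x₁^2+t^2)^e) ≤ (x₁ - 0) • ((x₁^2) ^ e) := by
      rw [← intervalIntegral.integral_const]
      apply intervalIntegral.integral_mono_on hx0.le (hint 0 x₁) intervalIntegrable_const
      intro t ht
      apply Real.rpow_le_rpow_of_nonpos (by positivity) (by nlinarith [sq_nonneg t]) he0
    have hgint : IntervalIntegrable (fun t : ℝ => t ^ (-(μ+1))) volume x₁ X := by
      apply ContinuousOn.intervalIntegrable
      apply ContinuousOn.rpow_const continuousOn_id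
      intro t ht
      rw [Set.uIcc_of_le hxX] at ht
      exact Or.inl (by dsimp; nlinarith [ht.1])
    have h2 : (∫ t in x₁..X, (x₁^2+t^2)^e) ≤ ∫ t in x₁..X, t ^ (-(μ+1)) := by
      apply intervalIntegral.integral_mono_on hxX (hint x₁ X) hgint
      intro t ht
      have ht1 : x₁ ≤ t := ht.1
      rw [← hpow t (by linarith)]
      apply Real.rpow_le_rpow_of_nonpos (by nlinarith) (by nlinarith [sq_nonneg x₁]) he0
    have h3 : (∫ t in x₁..X, t ^ (-(μ+1))) = (X ^ (-μ) - x₁ ^ (-μ)) / (-μ) := by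
      rw [integral_rpow (Or.inr ⟨by intro hc; simp at hc; linarith,
        by rw [Set.uIcc_of_le hxX]; intro hc; exact absurd hc.1 (by linarith)⟩)]
      norm_num
    have h4 : (X ^ (-μ) - x₁ ^ (-μ)) / (-μ) ≤ x₁ ^ (-μ) / μ := by
      rw [div_neg, ← neg_div, neg_sub]
      gcongr
      exact sub_le_self _ (Real.rpow_nonneg (by linarith) _)
    have hval1 : (x₁ - 0) • ((x₁^2) ^ e) = x₁ ^ (-μ) := by
      rw [smul_eq_mul, sub_zero, hpow x₁ hx0]
      rw [show x₁ * x₁ ^ (-(μ+1)) = x₁ ^ (1:ℝ) * x₁ ^ (-(μ+1)) by rw [Real.rpow_one]]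
      rw [← Real.rpow_add hx0]
      congr 1; ring
    have hfin : (1+1/μ)*x₁^(-μ) = x₁^(-μ) + x₁^(-μ)/μ := by field_simp
    rw [hsplit]
    linarith

/-- The projection of a two-dimensional Lévy step on a coordinate axis is again
Lévy-distributed with the same exponent: for an isotropic vector `V` in `ℝ²` whose
length has density `p^μ` (`= a` on `[0,1]`, `a ℓ^{−μ}` on `(1, ℓ_max)`, `0` beyond),
the planar density is `p^V(x) = p^μ(‖x‖)/(2π‖x‖)` and the marginal density of `|V₁|`,
`p^{|V₁|}(x₁) = 2∫₀^{√(ℓ_max²−x₁²)} p^V(x₁,x₂) dx₂`, satisfies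
`p^{|V₁|}(x₁) = Θ(x₁^{−μ})` for `x₁ ∈ (1, ℓ_max/2)`, with constants depending
only on `μ`. -/
theorem stmt_11 (μ : ℝ) (hμ1 : 1 < μ) (hμ3 : μ ≤ 3) :
    ∃ c₁ c₂ : ℝ, 0 < c₁ ∧ 0 < c₂ ∧
      ∀ (lmax : ℝ), 2 < lmax →
      ∀ a : ℝ, a = (1 + ∫ t in (1)..lmax, t ^ (-μ))⁻¹ →
      ∀ pmu : ℝ → ℝ, (∀ ℓ : ℝ, pmu ℓ =
          if ℓ < 0 then 0 else if ℓ ≤ 1 then a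
            else if ℓ < lmax then a * ℓ ^ (-μ) else 0) →
      ∀ pV : ℝ → ℝ → ℝ, (∀ x₁ x₂ : ℝ, pV x₁ x₂ =
          pmu (Real.sqrt (x₁ ^ 2 + x₂ ^ 2)) /
            (2 * Real.pi * Real.sqrt (x₁ ^ 2 + x₂ ^ 2))) →
      ∀ marg : ℝ → ℝ, (∀ x₁ : ℝ, marg x₁ =
          2 * ∫ x₂ in (0)..Real.sqrt (lmax ^ 2 - x₁ ^ 2), pV x₁ x₂) →
      ∀ x₁ : ℝ, 1 < x₁ → x₁ < lmax / 2 →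
        c₁ * x₁ ^ (-μ) ≤ marg x₁ ∧ marg x₁ ≤ c₂ * x₁ ^ (-μ) := by
  have hπ : (0:ℝ) < Real.pi := Real.pi_pos
  have hμ0 : (0:ℝ) < μ := by linarith
  refine ⟨(μ-1)/μ/Real.pi * 2 ^ (-((μ+1)/2)), (1+1/μ)/Real.pi,
    mul_pos (div_pos (div_pos (by linarith) hμ0) hπ) (Real.rpow_pos_of_pos two_pos _),
    by positivity, ?_⟩
  intro lmax hl a ha pmu hpmu pV hpV marg hmarg x₁ hx1 hx2
  have hx0 : (0:ℝ) < x₁ := by linarith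
  have hlx : x₁ < lmax := by linarith
  set e : ℝ := -((μ+1)/2) with he
  set X := Real.sqrt (lmax ^ 2 - x₁ ^ 2) with hX
  have hXsq : X ^ 2 = lmax ^ 2 - x₁ ^ 2 := Real.sq_sqrt (by nlinarith)
  have hX0 : 0 ≤ X := Real.sqrt_nonneg _
  have hxX : x₁ ≤ X := by
    rw [hX, Real.le_sqrt hx0.le (by nlinarith)]
    nlinarith
  -- bounds on a
  have hIval : (∫ t in (1:ℝ)..lmax, t ^ (-μ)) = (lmax ^ (-μ+1) - 1) / (-μ+1) := by
    rw [integral_rpow (Or.inr ⟨by intro hc; rw [neg_eq_iff_eq_neg] at hc; linarith,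
      by rw [Set.uIcc_of_le (by linarith)]; intro hc; linarith [hc.1]⟩)]
    norm_num
  have hlm1 : lmax ^ (-μ+1) ≤ 1 :=
    Real.rpow_le_one_of_one_le_of_nonpos (by linarith) (by linarith)
  have hlm0 : 0 ≤ lmax ^ (-μ+1) := Real.rpow_nonneg (by linarith) _
  have hIval2 : (∫ t in (1:ℝ)..lmax, t ^ (-μ)) = (1 - lmax ^ (-μ+1)) / (μ-1) := by
    rw [hIval]; rw [div_eq_div_iff (by linarith) (by linarith)]; ring
  have hI0 : 0 ≤ ∫ t in (1:ℝ)..lmax, t ^ (-μ) := by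
    rw [hIval2]; exact div_nonneg (by linarith) (by linarith)
  have hIub : (∫ t in (1:ℝ)..lmax, t ^ (-μ)) ≤ 1/(μ-1) := by
    rw [hIval2]; gcongr <;> linarith
  have ha_pos : 0 < a := by rw [ha]; exact inv_pos.mpr (by linarith)
  have ha_le1 : a ≤ 1 := by
    rw [ha]
    exact inv_le_one_of_one_le₀ (by linarith)
  have ha_ge : (μ-1)/μ ≤ a := by
    have hsum : 1 + (∫ t in (1:ℝ)..lmax, t ^ (-μ)) ≤ μ/(μ-1) := by
      have hne : μ - 1 ≠ 0 := by linarith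
      rw [show μ/(μ-1) = 1 + 1/(μ-1) by field_simp; ring]
      linarith
    rw [ha, show (μ-1)/μ = (μ/(μ-1))⁻¹ by rw [inv_div]]
    exact inv_anti₀ (by positivity) hsum
  -- rewrite the marginal
  have hIeq : (∫ t in (0:ℝ)..X, pV x₁ t)
      = ∫ t in (0:ℝ)..X, a / (2*Real.pi) * (x₁ ^ 2 + t ^ 2) ^ e := by
    apply intervalIntegral.integral_congr_ae
    have h0 : ∀ᵐ (t:ℝ), t ≠ X := by
      rw [MeasureTheory.ae_iff]
      simpa using Real.volume_singleton (a := X)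
    filter_upwards [h0] with t htX ht
    rw [Set.uIoc_of_le hX0] at ht
    have htlt : t < X := lt_of_le_of_ne ht.2 htX
    have hts : x₁ ^ 2 + t ^ 2 < lmax ^ 2 := by nlinarith [ht.1]
    rw [hpV, hpmu]
    exact pt_aux μ a lmax x₁ t hx1 (by linarith) ht.1 hts
  have hsmul : (∫ t in (0:ℝ)..X, a / (2*Real.pi) * (x₁ ^ 2 + t ^ 2) ^ e)
      = a / (2*Real.pi) * ∫ t in (0:ℝ)..X, (x₁ ^ 2 + t ^ 2) ^ e :=
    intervalIntegral.integral_const_mul _ _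
  have hmarg' : marg x₁ = a / Real.pi * ∫ t in (0:ℝ)..X, (x₁ ^ 2 + t ^ 2) ^ e := by
    rw [hmarg, ← hX, hIeq, hsmul]
    field_simp
  obtain ⟨hJl, hJu⟩ := J_aux μ x₁ X hμ1 hx1 hxX
  set J := ∫ t in (0:ℝ)..X, (x₁ ^ 2 + t ^ 2) ^ e with hJ
  have hP : (0:ℝ) < x₁ ^ (-μ) := Real.rpow_pos_of_pos hx0 _
  have h2e : (0:ℝ) < 2 ^ e := Real.rpow_pos_of_pos two_pos _
  constructor
  · rw [hmarg']
    calc (μ-1)/μ/Real.pi * 2 ^ e * x₁ ^ (-μ)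
        = (μ-1)/μ/Real.pi * (2 ^ e * x₁ ^ (-μ)) := by ring
      _ ≤ a/Real.pi * (2 ^ e * x₁ ^ (-μ)) := by
          apply mul_le_mul_of_nonneg_right (by gcongr) (by positivity)
      _ ≤ a/Real.pi * J := by
          apply mul_le_mul_of_nonneg_left hJl (by positivity)
  · rw [hmarg']
    calc a/Real.pi * J ≤ 1/Real.pi * ((1+1/μ) * x₁ ^ (-μ)) := by
          apply mul_le_mul (by gcongr) hJu (le_trans (by positivity) hJl) (by positivity)
      _ = (1+1/μ)/Real.pi * x₁ ^ (-μ) := by ring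
end
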